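/- Let k ≥ 2 be an integer. For every real number b > 1, ∑_{i=0}^{k-1} (k-1-i) b^i ≤ k(k-1)/2 + ((k-2)/3) · (∑_{i=1}^{k-1} b^i - (k-1)). -/

import Mathlib

open Finset

private lemma stmt5_sum_id (n : ℕ) : ∑ j ∈ range n, (j:ℝ) = n*(n-1)/2 := by
  induction n with
  | zero => simp
  | succ n ih => rw [Finset.sum_range_succ, ih]; push_cast; ring

private lemma stmt5_sum_sq (n : ℕ) : ∑ j ∈ range n, (j:ℝ)^2 = n*(n-1)*(2*n-1)/6 := by
  induction n with
  | zero => simp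
  | succ n ih => rw [Finset.sum_range_succ, ih]; push_cast; ring

private lemma stmt5_L0 (b : ℝ) (n : ℕ) : (b-1) * ∑ j ∈ range n, b^j = b^n - 1 := by
  induction n with
  | zero => simp
  | succ n ih => rw [Finset.sum_range_succ, mul_add, ih]; ring

private lemma stmt5_L1 (b : ℝ) (n : ℕ) : (b-1) * ∑ j ∈ range n, (j:ℝ) * b^j
    = ((n:ℝ)-1)*b^n - ∑ j ∈ range n, b^j + 1 := by
  induction n with
  | zero => simp
  | succ n ih =>
    rw [Finset.sum_range_succ, mul_add, ih, Finset.sum_range_succ]; push_cast; ring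

private lemma stmt5_L2 (b : ℝ) (n : ℕ) : (b-1) * ∑ j ∈ range n, (j:ℝ)^2 * b^j
    = ((n:ℝ)-1)^2*b^n + ∑ j ∈ range n, b^j - 1 - 2 * ∑ j ∈ range n, (j:ℝ)*b^j := by
  induction n with
  | zero => simp
  | succ n ih =>
    rw [Finset.sum_range_succ, mul_add, ih, Finset.sum_range_succ,
      Finset.sum_range_succ (f := fun j => (j:ℝ)*b^j)]; push_cast; ring

private lemma stmt5_sumT (n : ℕ) : ∑ j ∈ range n, ((n:ℝ)-j)*(3*j-((n:ℝ)-1)) = 0 := by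
  have e : ∀ j ∈ range n, ((n:ℝ)-j)*(3*j-((n:ℝ)-1))
      = -3*(j:ℝ)^2 + (4*n-1)*(j:ℝ) - n*(n-1) := fun j _ => by ring
  rw [Finset.sum_congr rfl e]
  simp only [Finset.sum_add_distrib, Finset.sum_sub_distrib, ← Finset.mul_sum,
    Finset.sum_const, Finset.card_range, nsmul_eq_mul, stmt5_sum_id, stmt5_sum_sq]
  ring

private lemma stmt5_hpt (n : ℕ) (b : ℝ) (hb : 1 < b) :
    ∀ j ∈ range n, (((n:ℝ)-j)*(3*j-((n:ℝ)-1))) * b^((n-1)/3)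
      ≤ (((n:ℝ)-j)*(3*j-((n:ℝ)-1))) * b^j := by
  intro j hj
  rw [Finset.mem_range] at hj
  have hnj : (0:ℝ) ≤ (n:ℝ) - j := by
    have : (j:ℝ) ≤ n := by exact_mod_cast hj.le
    linarith
  rcases le_or_gt (n-1) (3*j) with h | h
  · have hT : (0:ℝ) ≤ ((n:ℝ)-j)*(3*j-((n:ℝ)-1)) := by
      have h' : n ≤ 3*j + 1 := by omega
      have : (n:ℝ) ≤ 3*j + 1 := by exact_mod_cast h'
      nlinarith
    have hm : (n-1)/3 ≤ j := by omega
    exact mul_le_mul_of_nonneg_left (pow_le_pow_right₀ hb.le hm) hT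
  · have hT : ((n:ℝ)-j)*(3*j-((n:ℝ)-1)) ≤ 0 := by
      have h' : 3*j + 1 ≤ n := by omega
      have : (3*(j:ℝ) + 1) ≤ n := by exact_mod_cast h'
      nlinarith
    have hm : j ≤ (n-1)/3 := by omega
    exact mul_le_mul_of_nonpos_left (pow_le_pow_right₀ hb.le hm) hT

private lemma stmt5_ident (n : ℕ) (b : ℝ) :
    ((↑(n+1):ℝ) * ((↑(n+1):ℝ) - 1) / 2
      + (((↑(n+1):ℝ) - 2) / 3) * (∑ i ∈ Finset.Icc 1 n, b ^ i - ((↑(n+1):ℝ) - 1)))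
      - ∑ i ∈ Finset.range (n+1), ((↑(n+1):ℝ) - 1 - i) * b ^ i
      = (b-1)/6 * ∑ j ∈ Finset.range n, (((n:ℝ)-j)*(3*j-((n:ℝ)-1))) * b^j := by
  have hIcc : ∑ i ∈ Finset.Icc 1 n, b ^ i = b * ∑ j ∈ range n, b ^ j := by
    rw [← Finset.Ico_add_one_right_eq_Icc, Finset.sum_Ico_eq_sum_range]
    simp [pow_add, pow_succ, Finset.mul_sum, mul_comm]
  have hL : ∑ i ∈ Finset.range (n+1), ((↑(n+1):ℝ) - 1 - i) * b ^ i
      = (n:ℝ) * ∑ j ∈ range n, b^j - ∑ j ∈ range n, (j:ℝ) * b^j := by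
    have hz : ((↑(n+1):ℝ) - 1 - (n:ℝ)) * b ^ n = 0 := by push_cast; ring
    rw [Finset.sum_range_succ, hz, add_zero, Finset.mul_sum, ← Finset.sum_sub_distrib]
    refine Finset.sum_congr rfl fun j _ => ?_
    push_cast; ring
  have key : ∑ j ∈ Finset.range n, (((n:ℝ)-j)*(3*j-((n:ℝ)-1))) * b^j
      = -3 * ∑ j ∈ range n, (j:ℝ)^2*b^j + (4*(n:ℝ)-1) * ∑ j ∈ range n, (j:ℝ)*b^j
        - (n:ℝ)*((n:ℝ)-1) * ∑ j ∈ range n, b^j := by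
    simp only [Finset.mul_sum, ← Finset.sum_sub_distrib, ← Finset.sum_add_distrib]
    refine Finset.sum_congr rfl fun j _ => ?_
    ring
  rw [hIcc, hL, key]
  push_cast
  linear_combination (((n:ℝ)-1)*((n:ℝ)+2)/6) * (stmt5_L0 b n)
    - ((4*(n:ℝ)-1)/6) * (stmt5_L1 b n) + (1/2) * (stmt5_L2 b n)

theorem stmt_5 (k : ℕ) (hk : 2 ≤ k) (b : ℝ) (hb : 1 < b) :
    ∑ i ∈ Finset.range k, ((k : ℝ) - 1 - i) * b ^ i
      ≤ k * (k - 1) / 2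
        + (((k : ℝ) - 2) / 3) * (∑ i ∈ Finset.Icc 1 (k - 1), b ^ i - ((k : ℝ) - 1)) := by
  have hex : ∃ n, k = n + 1 := ⟨k - 1, by omega⟩
  obtain ⟨n, rfl⟩ := hex
  simp only [Nat.add_sub_cancel]
  have hS : 0 ≤ ∑ j ∈ Finset.range n, (((n:ℝ)-j)*(3*j-((n:ℝ)-1))) * b^j := by
    calc (0:ℝ) = (∑ j ∈ range n, ((n:ℝ)-j)*(3*j-((n:ℝ)-1))) * b^((n-1)/3) := by
          rw [stmt5_sumT]; ring
      _ = ∑ j ∈ range n, (((n:ℝ)-j)*(3*j-((n:ℝ)-1))) * b^((n-1)/3) := by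
          rw [Finset.sum_mul]
      _ ≤ _ := Finset.sum_le_sum (stmt5_hpt n b hb)
  have hident := stmt5_ident n b
  nlinarith [mul_nonneg (by linarith : (0:ℝ) ≤ (b-1)/6) hS]
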